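/- Let R be a positive definite matrix, let 𝓔 be the twirling map 𝓔(S) = (1/|G|) Σ_{g∈G} U_g S U_g† for a finite group of unitaries, and let S be a positive definite matrix fixed by 𝓔. Define K(S) = S^{-1/2} (𝓔((S^{1/2} R S^{1/2})^{1/2}))² S^{-1/2}. Then K(S) ≤ λ_max(R) · I. -/

import Mathlib

open Matrix
open scoped ComplexOrder Classical

variable {n : Type*} [Fintype n] [DecidableEq n]

/-- The positive semidefinite square root of a matrix (junk value `0` if not PSD). -/
noncomputable def msqrt (A : Matrix n n ℂ) : Matrix n n ℂ :=
  if h : A.PosSemidef then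
    (h.1.eigenvectorUnitary : Matrix n n ℂ) * diagonal (((↑) : ℝ → ℂ) ∘ Real.sqrt ∘ h.1.eigenvalues) *
      (star h.1.eigenvectorUnitary : Matrix n n ℂ)
  else 0

/-- The trace norm `‖M‖₁ = Tr √(Mᴴ M)`. -/
noncomputable def traceNorm (M : Matrix n n ℂ) : ℝ :=
  ((msqrt (Mᴴ * M)).trace).re

/-- The fidelity `F(R,S) = (Tr √(√R S √R))²` of positive semidefinite matrices. -/
noncomputable def fidelity (R S : Matrix n n ℂ) : ℝ :=
  (((msqrt (msqrt R * S * msqrt R)).trace).re) ^ 2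

/-- The squared Bures distance `B(R,S)² = Tr R + Tr S - 2 √F(R,S)`. -/
noncomputable def bures2 (R S : Matrix n n ℂ) : ℝ :=
  (R.trace).re + (S.trace).re - 2 * Real.sqrt (fidelity R S)

/-- The twirling map `𝓔(X) = (1/|G|) ∑ g, U g * X * (U g)ᴴ`. -/
noncomputable def twirl {G : Type*} [Fintype G] (U : G → Matrix n n ℂ)
    (X : Matrix n n ℂ) : Matrix n n ℂ :=
  (Fintype.card G : ℂ)⁻¹ • ∑ g, U g * X * (U g)ᴴ

/-- The maximum eigenvalue of a Hermitian matrix. -/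
noncomputable def lamMax {A : Matrix n n ℂ} (hA : A.IsHermitian) : ℝ :=
  ⨆ i, hA.eigenvalues i

/-- The minimum eigenvalue of a Hermitian matrix. -/
noncomputable def lamMin {A : Matrix n n ℂ} (hA : A.IsHermitian) : ℝ :=
  ⨅ i, hA.eigenvalues i

/-- The fixed point iteration map `K(S) = S^{-1/2} (𝓔((S^{1/2} R S^{1/2})^{1/2}))² S^{-1/2}`. -/
noncomputable def iterMap {G : Type*} [Fintype G] (U : G → Matrix n n ℂ)
    (R S : Matrix n n ℂ) : Matrix n n ℂ :=
  (msqrt S)⁻¹ * (twirl U (msqrt (msqrt S * R * msqrt S))) ^ 2 * (msqrt S)⁻¹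


section Aux

set_option linter.unusedSectionVars false
set_option maxHeartbeats 1000000

/-- The PSD square root attached to a PSD proof. -/
noncomputable def Matrix.PosSemidef.sqrt {A : Matrix n n ℂ} (_h : A.PosSemidef) : Matrix n n ℂ :=
  msqrt A

lemma Matrix.PosSemidef.posSemidef_sqrt {A : Matrix n n ℂ} (h : A.PosSemidef) :
    h.sqrt.PosSemidef := by
  rw [Matrix.PosSemidef.sqrt, msqrt, dif_pos h, Matrix.star_eq_conjTranspose]
  refine PosSemidef.mul_mul_conjTranspose_same ?_ _
  refine posSemidef_diagonal_iff.mpr fun i => ?_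
  simp [Real.sqrt_nonneg]

lemma Matrix.PosSemidef.sqrt_mul_self {A : Matrix n n ℂ} (h : A.PosSemidef) :
    h.sqrt * h.sqrt = A := by
  rw [Matrix.PosSemidef.sqrt, msqrt, dif_pos h]
  have hu : (star h.1.eigenvectorUnitary : Matrix n n ℂ) * (h.1.eigenvectorUnitary : Matrix n n ℂ) = 1 :=
    Unitary.coe_star_mul_self _
  have hD : diagonal (((↑) : ℝ → ℂ) ∘ Real.sqrt ∘ h.1.eigenvalues) *
      diagonal (((↑) : ℝ → ℂ) ∘ Real.sqrt ∘ h.1.eigenvalues) = diagonal (RCLike.ofReal ∘ h.1.eigenvalues) := by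
    rw [diagonal_mul_diagonal]
    congr 1
    funext i
    simp only [Function.comp_apply]
    rw [← Complex.ofReal_mul, Real.mul_self_sqrt (h.eigenvalues_nonneg i)]
    rfl
  have hspec := h.1.spectral_theorem
  simp only [Unitary.conjStarAlgAut_apply] at hspec
  calc _ = (h.1.eigenvectorUnitary : Matrix n n ℂ) * (diagonal (((↑) : ℝ → ℂ) ∘ Real.sqrt ∘ h.1.eigenvalues) *
      ((star h.1.eigenvectorUnitary : Matrix n n ℂ) * (h.1.eigenvectorUnitary : Matrix n n ℂ)) *
      diagonal (((↑) : ℝ → ℂ) ∘ Real.sqrt ∘ h.1.eigenvalues)) * (star h.1.eigenvectorUnitary : Matrix n n ℂ) := by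
        simp only [mul_assoc]
    _ = A := by rw [hu, mul_one, hD]; exact hspec.symm

lemma Matrix.PosSemidef.sq_sqrt {A : Matrix n n ℂ} (h : A.PosSemidef) :
    h.sqrt ^ 2 = A := by
  rw [pow_two, h.sqrt_mul_self]

/-- smul of a PSD matrix by a nonneg real is PSD. -/
lemma psd_smul' {c : ℝ} (hc : 0 ≤ c) {X : Matrix n n ℂ} (hX : X.PosSemidef) :
    ((c : ℂ) • X).PosSemidef := by
  constructor
  · simpa [Matrix.IsHermitian, conjTranspose_smul] using
      congrArg (fun M => (starRingEnd ℂ c) • M) hX.1 |>.trans (by simp)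
  · intro x
    have h := hX.2 x
    have : (x.sum fun i xi => x.sum fun j xj => star xi * ((c : ℂ) • X) i j * xj) = (c : ℂ) * (x.sum fun i xi => x.sum fun j xj => star xi * X i j * xj) := by
      simp [Finsupp.mul_sum, smul_eq_mul, mul_assoc, mul_left_comm]
    rw [this]
    exact mul_nonneg (by exact_mod_cast Complex.zero_le_real.mpr hc) h

lemma psd_sum' {ι : Type*} (s : Finset ι) (f : ι → Matrix n n ℂ)
    (hf : ∀ i ∈ s, (f i).PosSemidef) : (∑ i ∈ s, f i).PosSemidef := by
  classical
  induction s using Finset.induction with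
  | empty => simpa using Matrix.PosSemidef.zero
  | insert _ _ hni ih =>
    rw [Finset.sum_insert hni]
    exact ((hf _ (Finset.mem_insert_self _ _))).add
      (ih fun i hi => hf i (Finset.mem_insert_of_mem hi))

lemma sq_herm_psd {H : Matrix n n ℂ} (hH : H.IsHermitian) : (H ^ 2).PosSemidef := by
  rw [pow_two]
  nth_rewrite 1 [← hH.eq]
  exact posSemidef_conjTranspose_mul_self H

lemma lamMax_bound {R : Matrix n n ℂ} (hR : R.IsHermitian) :
    ((lamMax hR : ℂ) • (1 : Matrix n n ℂ) - R).PosSemidef := by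
  set c := lamMax hR with hc
  set V : Matrix n n ℂ := (hR.eigenvectorUnitary : Matrix n n ℂ) with hV
  have hVu : V * Vᴴ = 1 := by
    simpa [Matrix.star_eq_conjTranspose] using
      (Matrix.mem_unitaryGroup_iff.mp hR.eigenvectorUnitary.2)
  have hspec : R = V * diagonal (RCLike.ofReal ∘ hR.eigenvalues) * Vᴴ := by
    simpa [Matrix.star_eq_conjTranspose] using hR.spectral_theorem
  have h1 : (c : ℂ) • (1 : Matrix n n ℂ) = V * ((c : ℂ) • 1) * Vᴴ := by
    rw [mul_smul_comm, smul_mul_assoc, mul_one, hVu]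
  have key : (c : ℂ) • (1 : Matrix n n ℂ) - R
      = V * (((c : ℂ) • 1) - diagonal (RCLike.ofReal ∘ hR.eigenvalues)) * Vᴴ := by
    rw [mul_sub, sub_mul, ← h1]
    congr 1
  have key2 : (((c : ℂ) • 1 : Matrix n n ℂ)) - diagonal (RCLike.ofReal ∘ hR.eigenvalues)
      = diagonal (fun i => ((c - hR.eigenvalues i : ℝ) : ℂ)) := by
    rw [smul_one_eq_diagonal, diagonal_sub]
    ext i
    push_cast
    simp
  rw [key, key2]
  refine PosSemidef.mul_mul_conjTranspose_same ?_ V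
  refine posSemidef_diagonal_iff.mpr fun i => ?_
  rw [Complex.zero_le_real]
  simp only [sub_nonneg, hc, lamMax]
  exact le_ciSup (Set.Finite.bddAbove (Set.finite_range _)) i

variable {G : Type*} [Fintype G]

lemma twirl_sub (U : G → Matrix n n ℂ) (X Y : Matrix n n ℂ) :
    twirl U (X - Y) = twirl U X - twirl U Y := by
  simp [twirl, mul_sub, sub_mul, Finset.sum_sub_distrib, smul_sub]

lemma twirl_smul (U : G → Matrix n n ℂ) (a : ℂ) (X : Matrix n n ℂ) :
    twirl U (a • X) = a • twirl U X := by
  simp only [twirl, Matrix.mul_smul, Matrix.smul_mul, ← Finset.smul_sum]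
  rw [smul_comm]

lemma twirl_psd (U : G → Matrix n n ℂ) {X : Matrix n n ℂ} (hX : X.PosSemidef) :
    (twirl U X).PosSemidef := by
  rw [twirl, show ((Fintype.card G : ℂ))⁻¹ = (((Fintype.card G : ℝ)⁻¹ : ℝ) : ℂ) by push_cast; ring]
  refine psd_smul' (by positivity) (psd_sum' _ _ fun g _ => ?_)
  exact hX.mul_mul_conjTranspose_same (U g)

lemma kadison (hG : (Fintype.card G : ℂ) ≠ 0)
    (U : G → Matrix n n ℂ) (hU : ∀ g, U g ∈ Matrix.unitaryGroup n ℂ)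
    {B : Matrix n n ℂ} (hB : B.IsHermitian) :
    (twirl U (B ^ 2) - (twirl U B) ^ 2).PosSemidef := by
  classical
  set m : ℂ := (Fintype.card G : ℂ) with hm
  set Y : G → Matrix n n ℂ := fun g => U g * B * (U g)ᴴ with hY
  have hUu : ∀ g, (U g)ᴴ * U g = 1 := fun g => by
    simpa [Matrix.star_eq_conjTranspose] using Matrix.mem_unitaryGroup_iff'.mp (hU g)
  have hYH : ∀ g, (Y g).IsHermitian := fun g => by
    simp [hY, Matrix.IsHermitian, conjTranspose_mul, mul_assoc, hB.eq]
  have hYsq : ∀ g, Y g ^ 2 = U g * B ^ 2 * (U g)ᴴ := by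
    intro g
    rw [pow_two, pow_two, hY]
    simp only [mul_assoc]
    rw [show (U g)ᴴ * (U g * (B * (U g)ᴴ)) = B * (U g)ᴴ by
      rw [← mul_assoc, hUu g, one_mul]]
  set T : Matrix n n ℂ := ∑ g, Y g with hT
  set Q : Matrix n n ℂ := ∑ g, Y g ^ 2 with hQ
  have expand : ∑ g, ∑ h, (Y g - Y h) ^ 2
      = (Fintype.card G) • Q + (Fintype.card G) • Q - T * T - T * T := by
    have e1 : ∀ g h : G, (Y g - Y h) ^ 2
        = Y g ^ 2 - Y g * Y h - Y h * Y g + Y h ^ 2 := by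
      intro g h
      simp only [pow_two, sub_mul, mul_sub]
      abel
    simp only [e1]
    simp only [Finset.sum_add_distrib, Finset.sum_sub_distrib, Finset.sum_const,
      ← Finset.mul_sum, ← Finset.sum_mul, Finset.card_univ]
    rw [← hT, ← hQ]
    rw [← Finset.smul_sum]
    abel
  have key : twirl U (B ^ 2) - (twirl U B) ^ 2
      = (((Fintype.card G : ℝ)⁻¹ ^ 2 / 2 : ℝ) : ℂ) • ∑ g, ∑ h, (Y g - Y h) ^ 2 := by
    have hE : twirl U (B ^ 2) = m⁻¹ • Q := by
      rw [twirl, hQ]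
      congr 1
      exact Finset.sum_congr rfl fun g _ => (hYsq g).symm
    have hE2 : (twirl U B) ^ 2 = (m⁻¹ ^ 2) • (T * T) := by
      rw [twirl, ← hT, smul_pow]
      congr 1
      exact pow_two T
    have hcast : (((Fintype.card G : ℝ)⁻¹ ^ 2 / 2 : ℝ) : ℂ) = m⁻¹ ^ 2 / 2 := by
      push_cast [hm]
      ring
    rw [hE, hE2, expand, hcast]
    have hns : ∀ X : Matrix n n ℂ, (Fintype.card G) • X = m • X := fun X => by
      rw [hm, Nat.cast_smul_eq_nsmul]
    rw [hns]
    match_scalars <;> field_simp <;> try ring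
  rw [key]
  apply psd_smul' (by positivity)
  apply psd_sum'
  intro g _
  apply psd_sum'
  intro h _
  exact sq_herm_psd ((hYH g).sub (hYH h))

end Aux

/-- `K(S) ≤ λ_max(R) · I` for `S` positive definite and invariant. -/
theorem iterMap_le_lamMax {G : Type*} [Fintype G] (U : G → Matrix n n ℂ)
    (hU : ∀ g, U g ∈ Matrix.unitaryGroup n ℂ)
    (R S : Matrix n n ℂ) (hR : R.PosDef) (hS : S.PosDef)
    (hfix : twirl U S = S) :
    ((lamMax hR.isHermitian : ℂ) • (1 : Matrix n n ℂ) - iterMap U R S).PosSemidef := by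
  classical
  rcases isEmpty_or_nonempty n with hn | hn
  · refine ⟨?_, fun x => by simp [Finsupp.sum, Finset.eq_empty_of_isEmpty]⟩
    ext i j
    exact (IsEmpty.false i).elim
  obtain ⟨i0⟩ := hn
  by_cases hG : (Fintype.card G : ℂ) = 0
  · exfalso
    have hGe : IsEmpty G := by
      rw [Nat.cast_eq_zero, Fintype.card_eq_zero_iff] at hG
      exact hG
    have hS0 : S = 0 := by
      rw [← hfix, twirl]
      simp [Finset.univ_eq_empty]
    have := hS.2 (x := Finsupp.single i0 (1 : ℂ)) (fun h => by simpa using congrArg (· i0) h)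
    rw [hS0] at this
    simp at this
  · set c := lamMax hR.isHermitian with hc
    have hSps := hS.posSemidef
    have hmsS : msqrt S = hSps.sqrt := rfl
    set T := hSps.sqrt with hTdef
    have hTpsd : T.PosSemidef := hSps.posSemidef_sqrt
    have hTH : T.IsHermitian := hTpsd.1
    have hTT : T * T = S := hSps.sqrt_mul_self
    have hdet : IsUnit T.det := by
      have h1 : T.det * T.det = S.det := by rw [← det_mul, hTT]
      have h2 : S.det ≠ 0 := hS.det_pos.ne'
      refine isUnit_iff_ne_zero.mpr fun h0 => h2 ?_
      rw [← h1, h0, mul_zero]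
    have hTinv1 : T * T⁻¹ = 1 := mul_nonsing_inv T hdet
    have hTinv2 : T⁻¹ * T = 1 := nonsing_inv_mul T hdet
    have hTiH : (T⁻¹).IsHermitian := hTH.inv
    set A := T * R * T with hAdef
    have hApsd : A.PosSemidef := by
      have := hR.posSemidef.mul_mul_conjTranspose_same T
      rwa [hTH.eq] at this
    have hmsA : msqrt A = hApsd.sqrt := rfl
    set B := hApsd.sqrt with hBdef
    have hBpsd : B.PosSemidef := hApsd.posSemidef_sqrt
    have hB2 : B ^ 2 = A := hApsd.sq_sqrt
    set E := twirl U B with hEdef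
    have step1 : (twirl U A - E ^ 2).PosSemidef := by
      have := kadison hG U hU hBpsd.1
      rwa [hB2] at this
    have step2 : ((c : ℂ) • S - A).PosSemidef := by
      have h0 := (lamMax_bound hR.isHermitian).mul_mul_conjTranspose_same T
      rw [hTH.eq] at h0
      have heq : T * ((c : ℂ) • (1 : Matrix n n ℂ) - R) * T = (c : ℂ) • S - A := by
        rw [mul_sub, sub_mul, mul_smul_comm, smul_mul_assoc, mul_one, hTT, hAdef]
      rwa [heq] at h0
    have step3 : ((c : ℂ) • S - twirl U A).PosSemidef := by
      have heq : twirl U ((c : ℂ) • S - A) = (c : ℂ) • S - twirl U A := by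
        rw [twirl_sub, twirl_smul, hfix]
      have := twirl_psd U step2
      rwa [heq] at this
    have step4 : ((c : ℂ) • S - E ^ 2).PosSemidef := by
      have := step3.add step1
      rwa [sub_add_sub_cancel] at this
    have step5 : (T⁻¹ * ((c : ℂ) • S - E ^ 2) * T⁻¹).PosSemidef := by
      have := step4.mul_mul_conjTranspose_same T⁻¹
      rwa [hTiH.eq] at this
    have final : T⁻¹ * ((c : ℂ) • S - E ^ 2) * T⁻¹
        = (c : ℂ) • (1 : Matrix n n ℂ) - iterMap U R S := by
      have h1 : T⁻¹ * S * T⁻¹ = 1 := by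
        rw [← hTT, ← mul_assoc, mul_assoc (T⁻¹ * T), hTinv2, hTinv1, one_mul]
      have h2 : iterMap U R S = T⁻¹ * E ^ 2 * T⁻¹ := by
        rw [iterMap, hmsS, ← hAdef, hmsA, ← hEdef]
      rw [h2, mul_sub, sub_mul, mul_smul_comm, smul_mul_assoc, h1]
    rwa [final] at step5
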